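/- Let G be a graph on [r] with no isolated vertex and J = J(G) its cover ideal. Then δ(J) = r/2 + (1/2)·max{|N(S)| − |S| : S is an independent set of G such that G\N[S] has no bipartite connected component}, where δ(J) is the maximum of the coordinate sums of the vertices of the polyhedron SP(G) = {x ∈ ℝ^r : x_i + x_j ≥ 1 for edges {i,j}, x ≥ 0}. -/

import Mathlib

/-- The polyhedron `SP(G) = {x ∈ ℝ^V : x i + x j ≥ 1 for all edges ij, x ≥ 0}`. -/
def SPgraph {V : Type*} (G : SimpleGraph V) : Set (V → ℝ) :=
  {x | (∀ i j, G.Adj i j → 1 ≤ x i + x j) ∧ ∀ i, 0 ≤ x i}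

/-- The (open) neighbourhood of a set of vertices. -/
def nbhdSet {V : Type*} (G : SimpleGraph V) (S : Set V) : Set V :=
  {v | v ∉ S ∧ ∃ u ∈ S, G.Adj u v}

/-- `S` is an independent set of `G`. -/
def indepSet {V : Type*} (G : SimpleGraph V) (S : Set V) : Prop :=
  ∀ u ∈ S, ∀ v ∈ S, ¬ G.Adj u v

/-- The connected component of `v` in `H` is bipartite (one-vertex components
count as bipartite). -/
def componentBipartite {W : Type*} (H : SimpleGraph W) (v : W) : Prop :=
  ∃ c : W → Bool, ∀ u w, H.Reachable v u → H.Reachable v w → H.Adj u w → c u ≠ c w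

/-- The induced subgraph of `G` on the complement of `N[S]` has no bipartite
connected component. -/
def noBipartiteCompOutsideClosedNbhd {V : Type*} (G : SimpleGraph V) (S : Set V) : Prop :=
  ∀ v : ((S ∪ nbhdSet G S)ᶜ : Set V),
    ¬ componentBipartite (G.induce ((S ∪ nbhdSet G S)ᶜ)) v

open Classical in
/-- The canonical half-integral point attached to an independent set. -/
noncomputable def xSvec {r : ℕ} (G : SimpleGraph (Fin r)) (S : Set (Fin r)) : Fin r → ℝ :=
  fun i => if i ∈ S then 0 else if i ∈ nbhdSet G S then 1 else 1/2

section Aux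

variable {r : ℕ}

lemma perturb_eq_zero {G : SimpleGraph (Fin r)} {v d : Fin r → ℝ}
    (hv : v ∈ Set.extremePoints ℝ (SPgraph G))
    (h1 : (fun i => v i + d i) ∈ SPgraph G)
    (h2 : (fun i => v i - d i) ∈ SPgraph G) (i : Fin r) : d i = 0 := by
  have hmem : v ∈ openSegment ℝ (fun i => v i + d i) (fun i => v i - d i) := by
    refine ⟨1/2, 1/2, by norm_num, by norm_num, by norm_num, ?_⟩
    funext j
    simp only [Pi.add_apply, Pi.smul_apply, smul_eq_mul]
    ring
  have h3 := (hv.2 h1 h2 hmem)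
  have h4 : v i + d i = v i := congrFun h3 i
  linarith

lemma reach_pm {W : Type*} {H : SimpleGraph W} {f : W → ℝ}
    (hf : ∀ a b, H.Adj a b → f b = - f a) {v u : W} (h : H.Reachable v u) :
    f u = f v ∨ f u = - f v := by
  obtain ⟨w⟩ := h
  induction w with
  | nil => exact Or.inl rfl
  | cons hadj p ih =>
    rcases ih with h' | h'
    · right; rw [h', hf _ _ hadj]
    · left; rw [h', hf _ _ hadj]; ring

lemma sum_ite_mem_set (T : Set (Fin r)) (c : ℝ) [DecidablePred (· ∈ T)] :
    ∑ i, (if i ∈ T then c else 0) = T.ncard * c := by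
  rw [← Finset.sum_filter, Finset.sum_const, nsmul_eq_mul]
  have : (Finset.filter (fun i => i ∈ T) Finset.univ).card = T.ncard := by
    rw [Set.ncard_eq_toFinset_card']
    congr 1
    ext i
    simp
  rw [this]

lemma xSvec_mem {G : SimpleGraph (Fin r)} {S : Set (Fin r)} (hS : indepSet G S) :
    xSvec G S ∈ SPgraph G := by
  classical
  refine ⟨?_, ?_⟩
  · intro i j hij
    show (1:ℝ) ≤ xSvec G S i + xSvec G S j
    by_cases hi : i ∈ S
    · have hj : j ∉ S := fun hj => hS i hi j hj hij
      have hjn : j ∈ nbhdSet G S := ⟨hj, i, hi, hij⟩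
      simp [xSvec, hi, hj, hjn]
    · by_cases hj : j ∈ S
      · have hin : i ∈ nbhdSet G S := ⟨hi, j, hj, hij.symm⟩
        simp [xSvec, hi, hj, hin]
      · have h1 : (1/2:ℝ) ≤ xSvec G S i := by
          simp only [xSvec, if_neg hi]; split_ifs <;> norm_num
        have h2 : (1/2:ℝ) ≤ xSvec G S j := by
          simp only [xSvec, if_neg hj]; split_ifs <;> norm_num
        linarith
  · intro i
    show (0:ℝ) ≤ xSvec G S i
    simp only [xSvec]; split_ifs <;> norm_num

lemma xSvec_sum {G : SimpleGraph (Fin r)} (S : Set (Fin r)) :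
    2 * (∑ i, xSvec G S i) - r = ((nbhdSet G S).ncard : ℝ) - S.ncard := by
  classical
  have hpt : ∀ i, xSvec G S i
      = 1/2 + (if i ∈ nbhdSet G S then (1/2:ℝ) else 0) - (if i ∈ S then (1/2:ℝ) else 0) := by
    intro i
    by_cases hi : i ∈ S
    · have hn : i ∉ nbhdSet G S := fun h => h.1 hi
      simp [xSvec, hi, hn]
    · by_cases hn : i ∈ nbhdSet G S <;> simp [xSvec, hi, hn] <;> norm_num
  rw [Finset.sum_congr rfl (fun i _ => hpt i)]
  rw [Finset.sum_sub_distrib, Finset.sum_add_distrib, Finset.sum_const,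
    sum_ite_mem_set, sum_ite_mem_set]
  simp only [Finset.card_univ, Fintype.card_fin, nsmul_eq_mul]
  ring

end Aux

section Extreme

variable {r : ℕ}

lemma xSvec_extreme {G : SimpleGraph (Fin r)} {S : Set (Fin r)}
    (hS : indepSet G S) (hB : noBipartiteCompOutsideClosedNbhd G S) :
    xSvec G S ∈ Set.extremePoints ℝ (SPgraph G) := by
  classical
  rw [mem_extremePoints]
  refine ⟨xSvec_mem hS, ?_⟩
  rintro y hy z hz ⟨a, b, ha, hb, hab, hsum⟩
  obtain ⟨hy1, hy2⟩ := hy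
  obtain ⟨hz1, hz2⟩ := hz
  set T : Set (Fin r) := (S ∪ nbhdSet G S)ᶜ with hT
  have hval : ∀ i, a * y i + b * z i = xSvec G S i := by
    intro i
    have := congrFun hsum i
    simpa [Pi.add_apply, Pi.smul_apply, smul_eq_mul] using this
  have hyS : ∀ i ∈ S, y i = 0 ∧ z i = 0 := by
    intro i hi
    have h0 : xSvec G S i = 0 := by simp [xSvec, hi]
    have hv := hval i
    rw [h0] at hv
    constructor <;> nlinarith [hy2 i, hz2 i]
  have hyN : ∀ i ∈ nbhdSet G S, y i = 1 ∧ z i = 1 := by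
    intro i hi
    obtain ⟨hiS, u, hu, hadj⟩ := hi
    have hyu : y u = 0 := (hyS u hu).1
    have hzu : z u = 0 := (hyS u hu).2
    have h1 : 1 ≤ y u + y i := hy1 u i hadj
    have h2 : 1 ≤ z u + z i := hz1 u i hadj
    have hin : i ∈ nbhdSet G S := ⟨hiS, u, hu, hadj⟩
    have h0 : xSvec G S i = 1 := by
      simp [xSvec, hiS, hin]
    have hv := hval i
    rw [h0] at hv
    constructor <;> nlinarith
  have hT12 : ∀ i ∈ T, xSvec G S i = 1/2 := by
    intro i hi
    rw [hT, Set.mem_compl_iff, Set.mem_union] at hi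
    push_neg at hi
    simp [xSvec, hi.1, hi.2]
  have htight : ∀ i ∈ T, ∀ j ∈ T, G.Adj i j → y i + y j = 1 ∧ z i + z j = 1 := by
    intro i hi j hj hadj
    have h1 : 1 ≤ y i + y j := hy1 i j hadj
    have h2 : 1 ≤ z i + z j := hz1 i j hadj
    have e' : a * (y i + y j) + b * (z i + z j) = 1 := by
      have ha1 := hval i; have ha2 := hval j
      rw [hT12 i hi] at ha1; rw [hT12 j hj] at ha2
      linear_combination ha1 + ha2
    constructor <;>
      nlinarith [mul_nonneg ha.le (sub_nonneg.2 h1), mul_nonneg hb.le (sub_nonneg.2 h2)]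
  have hyT : ∀ i ∈ T, y i = 1/2 := by
    by_contra hc
    push_neg at hc
    obtain ⟨i0, hi0, hne⟩ := hc
    set f : ↥T → ℝ := fun u => y u.1 - 1/2 with hf
    have halt : ∀ u w : ↥T, (G.induce T).Adj u w → f w = - f u := by
      intro u w huw
      have h := (htight u.1 u.2 w.1 w.2 huw).1
      simp only [hf]
      linarith
    refine hB ⟨i0, hi0⟩ ⟨fun u => decide (0 < f u), ?_⟩
    intro u w hu hw hadj
    have h1 := reach_pm halt hu
    have h3 := halt u w hadj
    have hne' : f ⟨i0, hi0⟩ ≠ 0 := by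
      simp only [hf]
      intro h
      exact hne (by linarith)
    have hfu : f u ≠ 0 := by
      rcases h1 with h | h
      · rw [h]; exact hne'
      · rw [h]; simpa using hne'
    simp only [ne_eq, decide_eq_decide]
    rw [h3]
    rcases lt_or_gt_of_ne hfu with h | h
    · intro hiff; have := hiff.2 (by linarith); linarith
    · intro hiff; have := hiff.1 h; linarith
  have hyx : y = xSvec G S := by
    funext i
    by_cases hi : i ∈ S
    · rw [(hyS i hi).1]; simp [xSvec, hi]
    · by_cases hn : i ∈ nbhdSet G S
      · rw [(hyN i hn).1]; simp [xSvec, hi, hn]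
      · have hiT : i ∈ T := by
          rw [hT, Set.mem_compl_iff, Set.mem_union]; push_neg; exact ⟨hi, hn⟩
        rw [hyT i hiT, hT12 i hiT]
  have hzx : z = xSvec G S := by
    funext i
    have h := hval i
    rw [congrFun hyx i] at h
    have ha' : a = 1 - b := by linarith
    rw [ha'] at h
    have h2 : b * z i = b * xSvec G S i := by ring_nf at h ⊢; linarith
    exact mul_left_cancel₀ (ne_of_gt hb) h2
  exact ⟨hyx, hzx⟩

end Extreme

section Classify

variable {r : ℕ}

lemma extreme_halfint {G : SimpleGraph (Fin r)} {v : Fin r → ℝ}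
    (hv : v ∈ Set.extremePoints ℝ (SPgraph G)) (i : Fin r) :
    v i = 0 ∨ v i = 1/2 ∨ v i = 1 := by
  classical
  obtain ⟨hv1, hv2⟩ := hv.1
  by_contra hbad
  push_neg at hbad
  obtain ⟨hb0, hbh, hb1⟩ := hbad
  set d : Fin r → ℝ :=
    fun j => if 0 < v j ∧ v j < 1/2 then 1 else if 1/2 < v j ∧ v j ≠ 1 then -1 else 0 with hd
  have hd1 : ∀ j, (d j = 1 ∧ 0 < v j ∧ v j < 1/2) ∨ (d j = -1 ∧ 1/2 < v j) ∨ d j = 0 := by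
    intro j
    simp only [hd]
    split_ifs with h1 h2
    · exact Or.inl ⟨rfl, h1⟩
    · exact Or.inr (Or.inl ⟨rfl, h2.1⟩)
    · exact Or.inr (Or.inr rfl)
  -- the minimal step size
  set P : Finset ℝ := insert (1/2 : ℝ)
      ((Finset.univ.filter (fun j : Fin r => 0 < v j)).image v ∪
       ((Finset.univ ×ˢ Finset.univ).filter
          (fun p : Fin r × Fin r => G.Adj p.1 p.2 ∧ 1 < v p.1 + v p.2)).image
          (fun p => (v p.1 + v p.2 - 1) / 2)) with hP
  have hPne : P.Nonempty := ⟨1/2, Finset.mem_insert_self _ _⟩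
  set ε : ℝ := P.min' hPne with he
  have hεpos : 0 < ε := by
    have hmem : ε ∈ P := P.min'_mem hPne
    rw [hP] at hmem
    rcases Finset.mem_insert.1 hmem with h | h
    · rw [h]; norm_num
    · rcases Finset.mem_union.1 h with h | h
      · obtain ⟨j, hj, hje⟩ := Finset.mem_image.1 h
        rw [← hje]; exact (Finset.mem_filter.1 hj).2
      · obtain ⟨p, hp, hpe⟩ := Finset.mem_image.1 h
        rw [← hpe]; linarith [(Finset.mem_filter.1 hp).2.2]
  have hεhalf : ε ≤ 1/2 := P.min'_le _ (Finset.mem_insert_self _ _)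
  have hεv : ∀ j, 0 < v j → ε ≤ v j := by
    intro j hj
    refine P.min'_le _ ?_
    rw [hP]
    exact Finset.mem_insert_of_mem (Finset.mem_union_left _
      (Finset.mem_image.2 ⟨j, Finset.mem_filter.2 ⟨Finset.mem_univ _, hj⟩, rfl⟩))
  have hεe : ∀ p q, G.Adj p q → 1 < v p + v q → ε ≤ (v p + v q - 1) / 2 := by
    intro p q hadj hlt
    refine P.min'_le _ ?_
    rw [hP]
    exact Finset.mem_insert_of_mem (Finset.mem_union_right _
      (Finset.mem_image.2 ⟨(p, q), Finset.mem_filter.2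
        ⟨Finset.mem_product.2 ⟨Finset.mem_univ _, Finset.mem_univ _⟩, hadj, hlt⟩, rfl⟩))
  -- tight edges: d sums to zero
  have key : ∀ p q, G.Adj p q → v p + v q = 1 → d p + d q = 0 := by
    intro p q hadj heq
    have hp0 : 0 ≤ v p := hv2 p
    have hq0 : 0 ≤ v q := hv2 q
    have hq : v q = 1 - v p := by linarith
    simp only [hd]
    rw [hq]
    rcases eq_or_lt_of_le hp0 with h0 | h0
    · rw [← h0]; norm_num
    · rcases lt_trichotomy (v p) (1/2) with h1 | h1 | h1
      · rw [if_pos ⟨h0, h1⟩, if_neg (by push_neg; intro h; linarith),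
          if_pos ⟨by linarith, by intro h; linarith⟩]
        norm_num
      · rw [h1]; norm_num
      · have hle1 : v p ≤ 1 := by linarith
        rcases eq_or_lt_of_le hle1 with h2 | h2
        · rw [h2]; norm_num
        · rw [if_neg (by push_neg; intro h; linarith),
            if_pos ⟨h1, ne_of_lt h2⟩,
            if_pos ⟨by linarith, by linarith⟩]
          norm_num
  -- membership of both perturbations
  have hmemboth : ∀ (s : ℝ), s = 1 ∨ s = -1 → (fun j => v j + (s * ε) * d j) ∈ SPgraph G := by
    intro s hs
    refine ⟨?_, ?_⟩
    · intro p q hadj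
      show (1:ℝ) ≤ v p + (s * ε) * d p + (v q + (s * ε) * d q)
      have hvpq : 1 ≤ v p + v q := hv1 p q hadj
      rcases lt_or_eq_of_le hvpq with hlt | heq
      · have h2ε : ε ≤ (v p + v q - 1) / 2 := hεe p q hadj hlt
        rcases hd1 p with ⟨hp, -⟩ | ⟨hp, -⟩ | hp <;>
          rcases hd1 q with ⟨hq, -⟩ | ⟨hq, -⟩ | hq <;>
          rw [hp, hq] <;> rcases hs with h | h <;> rw [h] <;> nlinarith
      · have hk := key p q hadj heq.symm
        have : (s * ε) * d p + (s * ε) * d q = 0 := by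
          have : d p = - d q := by linarith
          rw [this]; ring
        linarith
    · intro j
      show (0:ℝ) ≤ v j + (s * ε) * d j
      rcases hd1 j with ⟨hj, hj1, hj2⟩ | ⟨hj, hj1⟩ | hj <;>
        rw [hj] <;> rcases hs with h | h <;> rw [h]
      · linarith
      · linarith [hεv j hj1]
      · linarith
      · linarith
      · simp; exact hv2 j
      · simp; exact hv2 j
  have hm1 := hmemboth 1 (Or.inl rfl)
  have hm2 := hmemboth (-1) (Or.inr rfl)
  have hm1' : (fun j => v j + ε * d j) ∈ SPgraph G := by simpa using hm1
  have hm2' : (fun j => v j - ε * d j) ∈ SPgraph G := by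
    simpa [sub_eq_add_neg, neg_mul] using hm2
  have hz := perturb_eq_zero hv hm1' hm2' i
  have hdi : d i = 0 := by
    rcases mul_eq_zero.1 hz with h | h
    · exact absurd h (ne_of_gt hεpos)
    · exact h
  have h0 : 0 < v i := lt_of_le_of_ne (hv2 i) (Ne.symm hb0)
  rcases lt_trichotomy (v i) (1/2) with h | h | h
  · have hdv : d i = 1 := by simp only [hd]; rw [if_pos ⟨h0, h⟩]
    rw [hdv] at hdi; norm_num at hdi
  · exact hbh h
  · have hdv : d i = -1 := by
      simp only [hd]
      rw [if_neg (by push_neg; intro; linarith), if_pos ⟨h, hb1⟩]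
    rw [hdv] at hdi; norm_num at hdi

lemma extreme_eq_xSvec {G : SimpleGraph (Fin r)} {v : Fin r → ℝ}
    (hv : v ∈ Set.extremePoints ℝ (SPgraph G)) :
    indepSet G {i | v i = 0} ∧ noBipartiteCompOutsideClosedNbhd G {i | v i = 0} ∧
      v = xSvec G {i | v i = 0} := by
  classical
  obtain ⟨hv1, hv2⟩ := hv.1
  set S : Set (Fin r) := {i | v i = 0} with hSdef
  have hind : indepSet G S := by
    intro u hu w hw hadj
    have h1 := hv1 u w hadj
    have hu' : v u = 0 := hu
    have hw' : v w = 0 := hw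
    linarith
  have hN1 : ∀ i ∈ nbhdSet G S, v i = 1 := by
    rintro i ⟨hiS, u, hu, hadj⟩
    have h1 : 1 ≤ v u + v i := hv1 u i hadj
    have hu' : v u = 0 := hu
    rcases extreme_halfint hv i with h | h | h
    · exact absurd h hiS
    · linarith
    · exact h
  have hout : ∀ i, i ∉ S → i ∉ nbhdSet G S → v i = 1/2 := by
    intro i hiS hiN
    rcases extreme_halfint hv i with h | h | h
    · exact absurd h hiS
    · exact h
    · exfalso
      have hnb : ∀ q, G.Adj i q → 1/2 ≤ v q := by
        intro q hq
        have hqS : q ∉ S := fun hqS => hiN ⟨hiS, q, hqS, hq.symm⟩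
        rcases extreme_halfint hv q with h' | h' | h'
        · exact absurd h' hqS
        · linarith [h'.ge]
        · linarith [h'.ge]
      set e : Fin r → ℝ := fun j => if j = i then (1/2 : ℝ) else 0 with he
      have hm1 : (fun j => v j + e j) ∈ SPgraph G := by
        refine ⟨?_, ?_⟩
        · intro p q hadj
          show (1:ℝ) ≤ v p + e p + (v q + e q)
          have h1 := hv1 p q hadj
          have hep : 0 ≤ e p := by simp only [he]; split_ifs <;> norm_num
          have heq : 0 ≤ e q := by simp only [he]; split_ifs <;> norm_num
          linarith
        · intro j
          show (0:ℝ) ≤ v j + e j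
          have : 0 ≤ e j := by simp only [he]; split_ifs <;> norm_num
          linarith [hv2 j]
      have hm2 : (fun j => v j - e j) ∈ SPgraph G := by
        refine ⟨?_, ?_⟩
        · intro p q hadj
          show (1:ℝ) ≤ v p - e p + (v q - e q)
          have hpq : p ≠ q := G.ne_of_adj hadj
          by_cases hp : p = i
          · have hq : q ≠ i := by rw [← hp]; exact hpq.symm
            have h1 : e p = 1/2 := by simp [he, hp]
            have h2 : e q = 0 := by simp [he, hq]
            have h3 : v p = 1 := by rw [hp]; exact h
            have h4 : 1/2 ≤ v q := hnb q (by rw [← hp]; exact hadj)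
            rw [h1, h2, h3]; linarith
          · by_cases hq : q = i
            · have h1 : e q = 1/2 := by simp [he, hq]
              have h2 : e p = 0 := by simp [he, hp]
              have h3 : v q = 1 := by rw [hq]; exact h
              have h4 : 1/2 ≤ v p := hnb p (by rw [← hq]; exact hadj.symm)
              rw [h1, h2, h3]; linarith
            · have h2 : e p = 0 := by simp [he, hp]
              have h3 : e q = 0 := by simp [he, hq]
              have h1 := hv1 p q hadj
              rw [h2, h3]; linarith
        · intro j
          show (0:ℝ) ≤ v j - e j
          by_cases hj : j = i
          · have h1 : e j = 1/2 := by simp [he, hj]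
            have h3 : v j = 1 := by rw [hj]; exact h
            rw [h1, h3]; norm_num
          · have h1 : e j = 0 := by simp [he, hj]
            rw [h1]; linarith [hv2 j]
      have hzero := perturb_eq_zero hv hm1 hm2 i
      simp [he] at hzero
  have hbip : noBipartiteCompOutsideClosedNbhd G S := by
    have key : ∀ (T : Set (Fin r)), T = (S ∪ nbhdSet G S)ᶜ → ∀ (v₀ : T) (c : T → Bool),
        (∀ u w, (G.induce T).Reachable v₀ u → (G.induce T).Reachable v₀ w →
          (G.induce T).Adj u w → c u ≠ c w) → False := by
      intro T hTd v₀ c hc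
      have hmemT : ∀ i, i ∈ T ↔ (i ∉ S ∧ i ∉ nbhdSet G S) := by
        intro i
        rw [hTd, Set.mem_compl_iff, Set.mem_union]
        tauto
      have hT12 : ∀ i ∈ T, v i = 1/2 := by
        intro i hi
        rw [hmemT] at hi
        exact hout i hi.1 hi.2
      set d : Fin r → ℝ := fun j =>
        if hj : j ∈ T then
          (if (G.induce T).Reachable v₀ ⟨j, hj⟩ then (if c ⟨j, hj⟩ then 1/2 else -1/2) else 0)
        else 0 with hd
      have hd3 : ∀ j, d j = 1/2 ∨ d j = -1/2 ∨ d j = 0 := by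
        intro j; simp only [hd]; split_ifs <;> norm_num
      have hdT : ∀ j, d j ≠ 0 → ∃ hj : j ∈ T, (G.induce T).Reachable v₀ ⟨j, hj⟩ := by
        intro j hjne
        by_cases hj : j ∈ T
        · refine ⟨hj, ?_⟩
          by_contra hre
          apply hjne
          simp only [hd]
          rw [dif_pos hj, if_neg hre]
        · exact absurd (by simp only [hd]; rw [dif_neg hj]) hjne
      have hdR : ∀ j (hj : j ∈ T), (G.induce T).Reachable v₀ ⟨j, hj⟩ → d j ≠ 0 := by
        intro j hj hre
        simp only [hd]
        rw [dif_pos hj, if_pos hre]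
        split_ifs <;> norm_num
      have hdsum : ∀ p q, G.Adj p q → d p ≠ 0 → d q ≠ 0 → d p + d q = 0 := by
        intro p q hadj hp hq
        obtain ⟨hpT, hpre⟩ := hdT p hp
        obtain ⟨hqT, hqre⟩ := hdT q hq
        have hadj' : (G.induce T).Adj ⟨p, hpT⟩ ⟨q, hqT⟩ := hadj
        have hcne := hc _ _ hpre hqre hadj'
        have hdp : d p = if c ⟨p, hpT⟩ then 1/2 else -1/2 := by
          simp only [hd]; rw [dif_pos hpT, if_pos hpre]
        have hdq : d q = if c ⟨q, hqT⟩ then 1/2 else -1/2 := by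
          simp only [hd]; rw [dif_pos hqT, if_pos hqre]
        rw [hdp, hdq]
        rcases Bool.eq_false_or_eq_true (c ⟨p, hpT⟩) with hp' | hp' <;>
          rcases Bool.eq_false_or_eq_true (c ⟨q, hqT⟩) with hq' | hq'
        · exact absurd (hp'.trans hq'.symm) hcne
        · rw [hp', hq']; norm_num
        · rw [hp', hq']; norm_num
        · exact absurd (hp'.trans hq'.symm) hcne
      have hsp : ∀ e : Fin r → ℝ,
          (∀ j, e j = 1/2 ∨ e j = -1/2 ∨ e j = 0) →
          (∀ j, e j ≠ 0 → ∃ hj : j ∈ T, (G.induce T).Reachable v₀ ⟨j, hj⟩) →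
          (∀ j (hj : j ∈ T), (G.induce T).Reachable v₀ ⟨j, hj⟩ → e j ≠ 0) →
          (∀ p q, G.Adj p q → e p ≠ 0 → e q ≠ 0 → e p + e q = 0) →
          (fun j => v j + e j) ∈ SPgraph G := by
        intro e he1 he2 he3 he4
        have main : ∀ p q, G.Adj p q → e p = 0 → e q ≠ 0 →
            (1:ℝ) ≤ v p + e p + (v q + e q) := by
          intro p q hadj hp hq
          obtain ⟨hqT, hqre⟩ := he2 q hq
          have hvq : v q = 1/2 := hT12 q hqT
          have hqSN : q ∉ S ∧ q ∉ nbhdSet G S := (hmemT q).1 hqT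
          have hpS : p ∉ S := fun hpS => hqSN.2 ⟨hqSN.1, p, hpS, hadj⟩
          have hpT : p ∉ T := by
            intro hpT
            have hadj' : (G.induce T).Adj ⟨q, hqT⟩ ⟨p, hpT⟩ := hadj.symm
            exact (he3 p hpT (hqre.trans hadj'.reachable)) hp
          have hpN : p ∈ nbhdSet G S := by
            have h' : ¬ (p ∉ S ∧ p ∉ nbhdSet G S) := fun hcon => hpT ((hmemT p).2 hcon)
            rcases not_and_or.1 h' with h'' | h''
            · exact absurd (not_not.1 h'') hpS
            · exact not_not.1 h''
          have hvp : v p = 1 := hN1 p hpN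
          have hq' : -(1/2) ≤ e q := by
            rcases he1 q with h' | h' | h' <;> rw [h'] <;> norm_num
          rw [hvp, hvq, hp]
          linarith
        refine ⟨?_, ?_⟩
        · intro p q hadj
          show (1:ℝ) ≤ v p + e p + (v q + e q)
          by_cases hp : e p = 0
          · by_cases hq : e q = 0
            · rw [hp, hq]
              have := hv1 p q hadj
              linarith
            · exact main p q hadj hp hq
          · by_cases hq : e q = 0
            · have := main q p hadj.symm hq hp
              linarith
            · obtain ⟨hpT, -⟩ := he2 p hp
              obtain ⟨hqT, -⟩ := he2 q hq
              have h4 := he4 p q hadj hp hq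
              rw [hT12 p hpT, hT12 q hqT]
              linarith
        · intro j
          show (0:ℝ) ≤ v j + e j
          by_cases hj : e j = 0
          · rw [hj]
            simpa using hv2 j
          · obtain ⟨hjT, -⟩ := he2 j hj
            rw [hT12 j hjT]
            rcases he1 j with h' | h' | h' <;> rw [h'] <;> norm_num
      have hm1 := hsp d hd3 hdT hdR hdsum
      have hm2 := hsp (fun j => -d j)
        (by intro j
            show -d j = 1/2 ∨ -d j = -1/2 ∨ -d j = 0
            rcases hd3 j with h' | h' | h' <;> rw [h'] <;> norm_num)
        (by intro j hj; exact hdT j (by simpa using hj))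
        (by intro j hjT hre; simpa using hdR j hjT hre)
        (by intro p q hadj hp hq
            show -d p + -d q = 0
            have := hdsum p q hadj (by simpa using hp) (by simpa using hq)
            linarith)
      have hm2' : (fun j => v j - d j) ∈ SPgraph G := by
        have hfe : (fun j => v j - d j) = (fun j => v j + (fun j => -d j) j) := by
          funext j; ring
        rw [hfe]
        exact hm2
      have hz := perturb_eq_zero hv hm1 hm2' v₀.1
      exact hdR v₀.1 v₀.2 (by exact SimpleGraph.Reachable.refl _) hz
    intro v₀ hcomp
    obtain ⟨c, hc⟩ := hcomp
    exact key _ rfl v₀ c hc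
  have hveq : v = xSvec G S := by
    funext i
    by_cases hi : i ∈ S
    · have h0 : v i = 0 := hi
      rw [h0]
      simp [xSvec, hi]
    · by_cases hn : i ∈ nbhdSet G S
      · rw [hN1 i hn]
        simp [xSvec, hi, hn]
      · rw [hout i hi hn]
        simp [xSvec, hi, hn]
  exact ⟨hind, hbip, hveq⟩

end Classify

/-- for a graph `G` on `[r]` with no isolated vertex,
`δ(J(G)) = r/2 + (1/2)·max{|N(S)| − |S|}`, the max over independent sets `S`
such that `G \ N[S]` has no bipartite component; `δ(J(G))` is the maximal
coordinate sum of a vertex of `SP(G)`. -/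
theorem delta_coverIdeal_formula
    {r : ℕ} (G : SimpleGraph (Fin r))
    (hiso : ∀ i, ∃ j, G.Adj i j)
    (δ : ℝ)
    (hδ : IsGreatest {x : ℝ | ∃ v ∈ Set.extremePoints ℝ (SPgraph G), x = ∑ i, v i} δ) :
    IsGreatest {x : ℝ | ∃ S : Set (Fin r),
        indepSet G S ∧ noBipartiteCompOutsideClosedNbhd G S ∧
        x = ((nbhdSet G S).ncard : ℝ) - (S.ncard : ℝ)}
      (2 * δ - r) := by
  obtain ⟨⟨v, hv, hδv⟩, hub⟩ := hδ
  obtain ⟨hind, hbip, hveq⟩ := extreme_eq_xSvec hv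
  constructor
  · refine ⟨{i | v i = 0}, hind, hbip, ?_⟩
    have hs := xSvec_sum (G := G) {i | v i = 0}
    rw [hδv,
      show (∑ i, v i) = ∑ i, xSvec G {i | v i = 0} i from Finset.sum_congr rfl fun i _ => congrFun hveq i]
    exact hs
  · rintro x ⟨S, hS1, hS2, rfl⟩
    have hx := xSvec_extreme hS1 hS2
    have hle : (∑ i, xSvec G S i) ≤ δ := hub ⟨xSvec G S, hx, rfl⟩
    have hs := xSvec_sum (G := G) S
    linarith
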